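/- Let a Dyck path of length 2m (m ≥ 1) be chosen uniformly at random, and let V be its number of visits to 0 (including the initial and final point). Then E[V] = C_{m+1}/C_m = (4m+2)/(m+2). -/

import Mathlib

/-- Height of the path after the first `k` steps (`true` = up-step `+1`,
`false` = down-step `-1`). -/
def pathSum {n : ℕ} (v : Fin n → Bool) (k : ℕ) : ℤ :=
  ∑ i ∈ Finset.univ.filter (fun i : Fin n => (i : ℕ) < k), (if v i then (1:ℤ) else -1)

/-- A Dyck path: ends at `0` and stays nonnegative. -/
def IsDyck {n : ℕ} (v : Fin n → Bool) : Prop :=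
  pathSum v n = 0 ∧ ∀ k, k ≤ n → 0 ≤ pathSum v k

open Classical in
/-- The finite set of all Dyck paths of length `n`. -/
noncomputable def dyckSet (n : ℕ) : Finset (Fin n → Bool) :=
  Finset.univ.filter fun v => IsDyck v

/-- Number of visits to `0` (including the initial and final point). -/
def visits {n : ℕ} (v : Fin n → Bool) : ℕ :=
  ((Finset.range (n + 1)).filter fun k => pathSum v k = 0).card

open DyckStep List

def toSteps {n : ℕ} (v : Fin n → Bool) : List DyckStep :=
  (List.ofFn v).map fun b => if b then U else D


/-- number of balanced prefixes (visits to 0) of a Dyck word -/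
def visitsW (p : DyckWord) : ℕ :=
  ((Finset.range (p.toList.length + 1)).filter
    fun k => (p.toList.take k).count U = (p.toList.take k).count D).card

lemma visitsW_zero : visitsW 0 = 1 := by
  simp [visitsW]
  rfl

lemma visitsW_nest_add (p q : DyckWord) : visitsW (p.nest + q) = 1 + visitsW q := by
  have hw : (p.nest + q).toList = (U :: p.toList ++ [D]) ++ q.toList := rfl
  set A : List DyckStep := U :: p.toList ++ [D] with hA
  have hAlen : A.length = p.toList.length + 2 := by simp [hA]
  have hlen : (p.nest + q).toList.length = (p.toList.length + 2) + q.toList.length := by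
    simp [hw, hAlen]
  -- condition on prefixes
  have claim1 : ∀ k, k < p.toList.length + 2 →
      ((((p.nest + q).toList.take k).count U = ((p.nest + q).toList.take k).count D) ↔ k = 0) := by
    intro k hk
    constructor
    · intro hC
      by_contra hk0
      have hklen : k ≤ A.length := by omega
      have htake : (p.nest + q).toList.take k = A.take k := by
        rw [hw, take_append_of_le_length hklen]
      have hAk : A.take k = U :: p.toList.take (k - 1) := by
        rw [hA]
        match k, hk0 with
        | (j+1), _ =>
          simp only [cons_append, take_succ_cons, Nat.add_sub_cancel]
          congr 1
          exact take_append_of_le_length (by omega)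
      rw [htake, hAk] at hC
      simp [count_cons] at hC
      have := p.count_D_le_count_U (k - 1)
      omega
    · intro hk0; subst hk0; simp
  have claim2 : ∀ j, ((((p.nest + q).toList.take (p.toList.length + 2 + j)).count U
        = ((p.nest + q).toList.take (p.toList.length + 2 + j)).count D) ↔
      ((q.toList.take j).count U = (q.toList.take j).count D)) := by
    intro j
    have htake : (p.nest + q).toList.take (p.toList.length + 2 + j)
        = A ++ q.toList.take j := by
      rw [hw, take_append, take_of_length_le (by omega)]
      congr 2
      omega
    have hAU : A.count U = p.toList.count U + 1 := by simp [hA, count_cons]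
    have hAD : A.count D = p.toList.count D + 1 := by simp [hA, count_cons]
    rw [htake]
    simp only [count_append, hAU, hAD, p.count_U_eq_count_D]
    omega
  -- split the range
  rw [visitsW, hlen, show (p.toList.length + 2) + q.toList.length + 1
      = (p.toList.length + 2) + (q.toList.length + 1) by omega,
    Finset.range_add, Finset.filter_union, Finset.filter_map,
    Finset.card_union_of_disjoint, Finset.card_map]
  · congr 1
    · -- left filter has card 1
      rw [show (1 : ℕ) = ({0} : Finset ℕ).card by simp]
      congr 1
      ext k
      simp only [Finset.mem_filter, Finset.mem_range, Finset.mem_singleton]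
      constructor
      · rintro ⟨hk, hC⟩; exact (claim1 k hk).mp hC
      · rintro rfl; simpa using (claim1 0 (by omega)).mpr rfl
    · -- right filter equals q's filter
      rw [visitsW]
      congr 1
      ext j
      simp only [Finset.mem_filter, Finset.mem_range, Function.comp,
        addLeftEmbedding_apply]
      rw [claim2 j]
  · -- disjointness
    rw [Finset.disjoint_left]
    intro k hk1 hk2
    simp only [Finset.mem_filter, Finset.mem_range] at hk1
    simp only [Finset.mem_map, addLeftEmbedding_apply] at hk2
    obtain ⟨j, -, rfl⟩ := hk2
    have := (claim1 _ hk1.1).mp hk1.2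
    omega


lemma eq_zero_of_semilength_eq_zero {p : DyckWord} (h : p.semilength = 0) : p = 0 := by
  rw [← DyckWord.toList_eq_nil, ← List.length_eq_zero_iff, ← p.two_mul_semilength_eq_length, h]

lemma sigma_pair_eq (n : ℕ)
    (x y : Σ i : Fin (n + 1),
      {p : DyckWord // p.semilength = i} × {p : DyckWord // p.semilength = n - i})
    (h1 : x.2.1.1 = y.2.1.1) (h2 : x.2.2.1 = y.2.2.1) : x = y := by
  obtain ⟨⟨i, hi⟩, ⟨a, ha⟩, ⟨b, hb⟩⟩ := x
  obtain ⟨⟨i', hi'⟩, ⟨a', ha'⟩, ⟨b', hb'⟩⟩ := y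
  dsimp at h1 h2 ha ha' hb hb'
  subst h1; subst h2
  obtain rfl : i = i' := by omega
  rfl

lemma ne_zero_of_semilength_succ {n : ℕ} (p : {p : DyckWord // p.semilength = n + 1}) :
    p.1 ≠ 0 := fun h0 => by
  have h2 := p.2; rw [h0] at h2; simp at h2

lemma dyck_inside_lt {n : ℕ} (p : {p : DyckWord // p.semilength = n + 1}) :
    p.1.insidePart.semilength < n + 1 := by
  have hkey := DyckWord.semilength_insidePart_add_semilength_outsidePart_add_one
    (ne_zero_of_semilength_succ p)
  rw [p.2] at hkey; omega

lemma dyck_outside_eq {n : ℕ} (p : {p : DyckWord // p.semilength = n + 1}) :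
    p.1.outsidePart.semilength = n - p.1.insidePart.semilength := by
  have hkey := DyckWord.semilength_insidePart_add_semilength_outsidePart_add_one
    (ne_zero_of_semilength_succ p)
  rw [p.2] at hkey; omega

noncomputable def dyckEquiv (n : ℕ) :
    {p : DyckWord // p.semilength = n + 1} ≃
      Σ i : Fin (n + 1),
        {p : DyckWord // p.semilength = i} × {p : DyckWord // p.semilength = n - i} where
  toFun p := ⟨⟨p.1.insidePart.semilength, dyck_inside_lt p⟩, ⟨p.1.insidePart, rfl⟩,
      ⟨p.1.outsidePart, dyck_outside_eq p⟩⟩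
  invFun x := ⟨x.2.1.1.nest + x.2.2.1, by
    obtain ⟨⟨i, hi⟩, ⟨a, ha⟩, ⟨b, hb⟩⟩ := x
    dsimp at ha hb ⊢
    rw [DyckWord.semilength_add, DyckWord.semilength_nest, ha, hb]
    omega⟩
  left_inv p :=
    Subtype.ext (DyckWord.nest_insidePart_add_outsidePart (ne_zero_of_semilength_succ p))
  right_inv x := by
    apply sigma_pair_eq
    · show (x.2.1.1.nest + x.2.2.1).insidePart = x.2.1.1
      rw [DyckWord.insidePart_add DyckWord.nest_ne_zero, DyckWord.insidePart_nest]
    · show (x.2.1.1.nest + x.2.2.1).outsidePart = x.2.2.1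
      rw [DyckWord.outsidePart_add DyckWord.nest_ne_zero, DyckWord.outsidePart_nest, zero_add]

lemma sum_visitsW (n : ℕ) :
    ∑ p : {p : DyckWord // p.semilength = n}, visitsW p.1 = catalan (n + 1) := by
  induction n using Nat.strong_induction_on with
  | _ n ih =>
    match n with
    | 0 =>
      have hu : (Finset.univ : Finset {p : DyckWord // p.semilength = 0}) = {⟨0, rfl⟩} := by
        ext p
        simp only [Finset.mem_univ, Finset.mem_singleton, true_iff]
        exact Subtype.ext (eq_zero_of_semilength_eq_zero p.2)
      rw [hu, Finset.sum_singleton, visitsW_zero, catalan_one]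
    | n + 1 =>
      have step : ∀ p : {p : DyckWord // p.semilength = n + 1},
          visitsW p.1 = (fun x : Σ i : Fin (n + 1),
            {p : DyckWord // p.semilength = i} × {p : DyckWord // p.semilength = n - i} =>
            visitsW (x.2.1.1.nest + x.2.2.1)) (dyckEquiv n p) := by
        intro p
        conv_lhs => rw [← DyckWord.nest_insidePart_add_outsidePart
          (ne_zero_of_semilength_succ p)]
        rfl
      rw [Finset.sum_congr rfl fun p _ => step p,
        Equiv.sum_comp (dyckEquiv n) (fun x : Σ i : Fin (n + 1),
          {p : DyckWord // p.semilength = i} × {p : DyckWord // p.semilength = n - i} =>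
          visitsW (x.2.1.1.nest + x.2.2.1))]
      rw [← Finset.univ_sigma_univ, Finset.sum_sigma]
      simp only [visitsW_nest_add, Fintype.sum_prod_type, Finset.sum_const, smul_eq_mul,
        Finset.card_univ, DyckWord.card_dyckWord_semilength_eq_catalan]
      have hsum : ∀ i : Fin (n + 1),
          (∑ b : {p : DyckWord // p.semilength = n - (i : ℕ)}, (1 + visitsW b.1))
            = catalan (n - (i : ℕ)) + catalan (n - (i : ℕ) + 1) := by
        intro i
        rw [Finset.sum_add_distrib, Finset.sum_const, smul_eq_mul, mul_one, Finset.card_univ,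
          DyckWord.card_dyckWord_semilength_eq_catalan, ih _ (by omega)]
      calc ∑ i : Fin (n + 1), catalan i * ∑ b : {p : DyckWord // p.semilength = n - (i : ℕ)},
              (1 + visitsW b.1)
          = ∑ i : Fin (n + 1), (catalan i * catalan (n - (i : ℕ))
              + catalan i * catalan (n + 1 - (i : ℕ))) := by
            refine Finset.sum_congr rfl fun i _ => ?_
            have hle : (i : ℕ) ≤ n := i.is_le
            rw [hsum i, Nat.mul_add, show n - (i : ℕ) + 1 = n + 1 - (i : ℕ) by omega]
        _ = catalan (n + 1) + ∑ i : Fin (n + 1), catalan i * catalan (n + 1 - (i : ℕ)) := by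
            rw [Finset.sum_add_distrib, catalan_succ]
        _ = catalan (n + 1 + 1) := by
            conv_rhs => rw [catalan_succ (n + 1), Fin.sum_univ_castSucc]
            simp only [Fin.coe_castSucc, Fin.val_last, Nat.sub_self, catalan_zero, mul_one]
            omega

lemma toSteps_length {n : ℕ} (v : Fin n → Bool) : (toSteps v).length = n := by
  simp [toSteps]

lemma count_add_count {l : List DyckStep} : l.count U + l.count D = l.length := by
  induction l with
  | nil => rfl
  | cons a t ih => cases a <;> simp [count_cons, ← ih] <;> omega

lemma pathSum_zero {n : ℕ} (v : Fin n → Bool) : pathSum v 0 = 0 := by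
  simp [pathSum]

lemma pathSum_succ {n : ℕ} (v : Fin n → Bool) (k : ℕ) :
    pathSum v (k + 1) = pathSum v k +
      (if h : k < n then (if v ⟨k, h⟩ then (1:ℤ) else -1) else 0) := by
  by_cases h : k < n
  · have hs : Finset.univ.filter (fun i : Fin n => (i : ℕ) < k + 1)
        = insert ⟨k, h⟩ (Finset.univ.filter (fun i : Fin n => (i : ℕ) < k)) := by
      ext i
      simp only [Finset.mem_filter, Finset.mem_univ, true_and, Finset.mem_insert, Fin.ext_iff]
      omega
    rw [pathSum, hs, Finset.sum_insert (by simp), dif_pos h]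
    rw [add_comm]; rfl
  · have hs : Finset.univ.filter (fun i : Fin n => (i : ℕ) < k + 1)
        = Finset.univ.filter (fun i : Fin n => (i : ℕ) < k) := by
      ext i
      simp only [Finset.mem_filter, Finset.mem_univ, true_and]
      have := i.2; omega
    rw [pathSum, hs, dif_neg h, add_zero]; rfl

lemma take_toSteps_succ {n : ℕ} (v : Fin n → Bool) (k : ℕ) (h : k < n) :
    (toSteps v).take (k + 1) = (toSteps v).take k ++ [if v ⟨k, h⟩ then U else D] := by
  rw [List.take_succ]
  congr 1
  have hlt : k < (toSteps v).length := by rw [toSteps_length]; exact h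
  rw [List.getElem?_eq_getElem hlt]
  simp [toSteps, List.getElem_ofFn]

lemma pathSum_eq_counts {n : ℕ} (v : Fin n → Bool) (k : ℕ) :
    pathSum v k = (((toSteps v).take k).count U : ℤ) - ((toSteps v).take k).count D := by
  induction k with
  | zero => simp [pathSum_zero]
  | succ k ih =>
    rw [pathSum_succ, ih]
    by_cases h : k < n
    · rw [dif_pos h, take_toSteps_succ v k h]
      cases hv : v ⟨k, h⟩ <;> simp [hv, count_append] <;> push_cast <;> ring
    · rw [dif_neg h, add_zero]
      have h1 : (toSteps v).take (k + 1) = (toSteps v).take k := by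
        rw [List.take_of_length_le (by rw [toSteps_length]; omega),
          List.take_of_length_le (by rw [toSteps_length]; omega)]
      rw [h1]

lemma pathSum_zero_iff {n : ℕ} (v : Fin n → Bool) (k : ℕ) :
    pathSum v k = 0 ↔ ((toSteps v).take k).count U = ((toSteps v).take k).count D := by
  rw [pathSum_eq_counts]; omega

lemma pathSum_nonneg_iff {n : ℕ} (v : Fin n → Bool) (k : ℕ) :
    0 ≤ pathSum v k ↔ ((toSteps v).take k).count D ≤ ((toSteps v).take k).count U := by
  rw [pathSum_eq_counts]; omega

/-- The Dyck word attached to a Dyck path. -/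
def toDyck {n : ℕ} (v : Fin n → Bool) (hv : IsDyck v) : DyckWord where
  toList := toSteps v
  count_U_eq_count_D := by
    have := (pathSum_zero_iff v n).mp hv.1
    rwa [List.take_of_length_le (by rw [toSteps_length])] at this
  count_D_le_count_U i := by
    by_cases h : i ≤ n
    · exact (pathSum_nonneg_iff v i).mp (hv.2 i h)
    · have h1 : (toSteps v).take i = (toSteps v).take n := by
        rw [List.take_of_length_le (by rw [toSteps_length]; omega),
          List.take_of_length_le (by rw [toSteps_length])]
      rw [h1]
      exact (pathSum_nonneg_iff v n).mp (hv.2 n le_rfl)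

lemma toDyck_semilength {m : ℕ} (v : Fin (2 * m) → Bool) (hv : IsDyck v) :
    (toDyck v hv).semilength = m := by
  have h1 : (toDyck v hv).toList.count U = (toDyck v hv).toList.count D :=
    (toDyck v hv).count_U_eq_count_D
  have h2 : (toDyck v hv).toList.count U + (toDyck v hv).toList.count D = 2 * m := by
    rw [count_add_count]; exact toSteps_length v
  rw [DyckWord.semilength]
  omega

lemma visits_eq_visitsW {n : ℕ} (v : Fin n → Bool) (hv : IsDyck v) :
    visits v = visitsW (toDyck v hv) := by
  rw [visits, visitsW]
  have hl : (toDyck v hv).toList.length = n := toSteps_length v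
  rw [hl]
  congr 1
  ext k
  simp only [Finset.mem_filter, Finset.mem_range]
  rw [pathSum_zero_iff]
  rfl

/-- The Dyck path attached to a Dyck word. -/
def fromDyck {n : ℕ} (p : DyckWord) (h : p.toList.length = n) : Fin n → Bool :=
  fun i => p.toList[(i : ℕ)]'(h ▸ i.2) == U

lemma toSteps_fromDyck {n : ℕ} (p : DyckWord) (h : p.toList.length = n) :
    toSteps (fromDyck p h) = p.toList := by
  apply List.ext_getElem
  · rw [toSteps_length, h]
  · intro i h1 h2
    rw [toSteps_length] at h1
    simp only [toSteps, fromDyck, List.getElem_map, List.getElem_ofFn]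
    rcases (p.toList[i]'h2).dichotomy with hd | hd <;> simp [hd]

lemma isDyck_fromDyck {n : ℕ} (p : DyckWord) (h : p.toList.length = n) :
    IsDyck (fromDyck p h) := by
  constructor
  · rw [pathSum_zero_iff, toSteps_fromDyck, List.take_of_length_le (le_of_eq h)]
    exact p.count_U_eq_count_D
  · intro k _
    rw [pathSum_nonneg_iff, toSteps_fromDyck]
    exact p.count_D_le_count_U k

lemma fromDyck_toDyck {n : ℕ} (v : Fin n → Bool) (hv : IsDyck v) :
    fromDyck (toDyck v hv) (toSteps_length v) = v := by
  funext i
  simp only [fromDyck, toDyck, toSteps, List.getElem_map, List.getElem_ofFn, Fin.eta]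
  cases hvi : v i <;> simp [hvi]

lemma toDyck_ext {n : ℕ} (v : Fin n → Bool) (hv : IsDyck v) (p : DyckWord)
    (hp : p.toList = toSteps v) : toDyck v hv = p := by
  ext1; rw [hp]; rfl

/-- Equivalence between Dyck paths of length `2*m` and Dyck words of semilength `m`. -/
noncomputable def pathWordEquiv (m : ℕ) :
    {v : Fin (2 * m) → Bool // IsDyck v} ≃ {p : DyckWord // p.semilength = m} where
  toFun v := ⟨toDyck v.1 v.2, toDyck_semilength v.1 v.2⟩
  invFun p := ⟨fromDyck p.1 (by rw [← p.1.two_mul_semilength_eq_length, p.2]),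
    isDyck_fromDyck _ _⟩
  left_inv v := Subtype.ext (fromDyck_toDyck v.1 v.2)
  right_inv p := by
    apply Subtype.ext
    dsimp only
    exact toDyck_ext _ _ _ (toSteps_fromDyck _ _).symm


lemma card_dyckSet (m : ℕ) : (dyckSet (2 * m)).card = catalan m := by
  classical
  have h1 : (dyckSet (2 * m)).card = Fintype.card {v : Fin (2 * m) → Bool // IsDyck v} := by
    rw [Fintype.card_subtype, dyckSet]
  rw [h1, Fintype.card_congr (pathWordEquiv m),
    DyckWord.card_dyckWord_semilength_eq_catalan]

lemma sum_visits (m : ℕ) : ∑ v ∈ dyckSet (2 * m), visits v = catalan (m + 1) := by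
  classical
  have h1 : ∑ v ∈ dyckSet (2 * m), visits v
      = ∑ v : {v : Fin (2 * m) → Bool // IsDyck v}, visits v.1 := by
    apply Finset.sum_subtype
    intro v
    simp [dyckSet]
  rw [h1]
  have h2 : ∀ v : {v : Fin (2 * m) → Bool // IsDyck v},
      visits v.1 = (fun p : {p : DyckWord // p.semilength = m} => visitsW p.1)
        (pathWordEquiv m v) :=
    fun v => visits_eq_visitsW v.1 v.2
  rw [Finset.sum_congr rfl fun v _ => h2 v,
    Equiv.sum_comp (pathWordEquiv m) (fun p : {p : DyckWord // p.semilength = m} => visitsW p.1),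
    sum_visitsW]

lemma catalan_ratio (m : ℕ) : (m + 2) * catalan (m + 1) = (4 * m + 2) * catalan m := by
  have h1 := succ_mul_catalan_eq_centralBinom (m + 1)
  have h2 := Nat.succ_mul_centralBinom_succ m
  have h3 := succ_mul_catalan_eq_centralBinom m
  apply Nat.eq_of_mul_eq_mul_left (show 0 < m + 1 by omega)
  calc (m + 1) * ((m + 2) * catalan (m + 1))
      = (m + 1 + 1) * catalan (m + 1) * (m + 1) := by ring
    _ = (m + 1) * Nat.centralBinom (m + 1) := by rw [h1]; ring
    _ = 2 * (2 * m + 1) * Nat.centralBinom m := h2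
    _ = 2 * (2 * m + 1) * ((m + 1) * catalan m) := by rw [h3]
    _ = (m + 1) * ((4 * m + 2) * catalan m) := by ring

lemma catalan_ne_zero (m : ℕ) : catalan m ≠ 0 := by
  intro h
  have h1 := succ_mul_catalan_eq_centralBinom m
  rw [h, Nat.mul_zero] at h1
  exact absurd h1.symm (Nat.centralBinom_pos m).ne'

theorem stmt_7 (m : ℕ) (hm : 1 ≤ m) :
    (∑ v ∈ dyckSet (2*m), (visits v : ℚ)) / ((dyckSet (2*m)).card : ℚ)
        = (catalan (m+1) : ℚ) / (catalan m : ℚ) ∧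
      (∑ v ∈ dyckSet (2*m), (visits v : ℚ)) / ((dyckSet (2*m)).card : ℚ)
        = (4*(m:ℚ) + 2) / ((m:ℚ) + 2) := by
  have hA : ((dyckSet (2*m)).card : ℚ) = (catalan m : ℚ) := by
    exact_mod_cast congrArg (Nat.cast : ℕ → ℚ) (card_dyckSet m)
  have hS : (∑ v ∈ dyckSet (2*m), (visits v : ℚ)) = (catalan (m+1) : ℚ) := by
    rw [← Nat.cast_sum]
    exact_mod_cast congrArg (Nat.cast : ℕ → ℚ) (sum_visits m)
  rw [hS, hA]
  refine ⟨rfl, ?_⟩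
  have hc : (catalan m : ℚ) ≠ 0 := by
    exact_mod_cast catalan_ne_zero m
  have hm2 : ((m:ℚ) + 2) ≠ 0 := by positivity
  rw [div_eq_div_iff hc hm2]
  have key : ((m:ℚ) + 2) * (catalan (m + 1) : ℚ) = (4*(m:ℚ) + 2) * (catalan m : ℚ) := by
    exact_mod_cast congrArg (Nat.cast : ℕ → ℚ) (catalan_ratio m)
  linear_combination key
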